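/- Let n_j : ℝ → E (j=1,…,N) be differentiable maps with derivatives ṅ_j such that {n_j(t)} is an orthonormal basis of E for every t, and let θ_j : ℝ → ℝ. Then for every t, the trace of the square of the shortcut Hamiltonian satisfies Tr[H_SA(t)²] = Σ_j ( ‖ṅ_j(t)‖² + θ_j(t)² + 2 i θ_j(t) ⟪ṅ_j(t), n_j(t)⟫ ) (an identity in ℂ; both sides are in fact real). -/

import Mathlib

/-- The rank-one operator `|u⟩⟨v| : z ↦ ⟪v, z⟫ • u`. -/
noncomputable def ketBra {E : Type*} [NormedAddCommGroup E] [InnerProductSpace ℂ E]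
    (u v : E) : E →L[ℂ] E :=
  (innerSL ℂ v).smulRight u

section Aux
variable {E : Type*} [NormedAddCommGroup E] [InnerProductSpace ℂ E]

theorem ketBra_apply (u v z : E) : ketBra u v z = (inner ℂ v z : ℂ) • u := rfl

theorem ketBra_comp_ketBra (u v w x : E) :
    (ketBra u v).comp (ketBra w x) = (inner ℂ v w : ℂ) • ketBra u x := by
  ext z
  simp [ketBra_apply, inner_smul_right, smul_smul, mul_comm]

theorem trace_eq_sum_inner'' [FiniteDimensional ℂ E] {N : ℕ}
    (b : OrthonormalBasis (Fin N) ℂ E) (f : E →ₗ[ℂ] E) :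
    LinearMap.trace ℂ E f = ∑ j : Fin N, (inner ℂ (b j) (f (b j)) : ℂ) := by
  rw [LinearMap.trace_eq_matrix_trace ℂ b.toBasis, Matrix.trace]
  simp [Matrix.diag, LinearMap.toMatrix_apply, OrthonormalBasis.coe_toBasis_repr_apply,
    OrthonormalBasis.repr_apply_apply]

theorem trace_ketBra [FiniteDimensional ℂ E] {N : ℕ}
    (b : OrthonormalBasis (Fin N) ℂ E) (u v : E) :
    LinearMap.trace ℂ E ((ketBra u v : E →L[ℂ] E) : E →ₗ[ℂ] E) = (inner ℂ v u : ℂ) := by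
  rw [trace_eq_sum_inner'' b]
  simp only [ContinuousLinearMap.coe_coe, ketBra_apply, inner_smul_right]
  exact b.sum_inner_mul_inner v u

end Aux

/-- The shortcut (transitionless) Hamiltonian
`H_SA(t) = i Σ_j ( |ṅ_j(t)⟩⟨n_j(t)| + i θ_j(t) |n_j(t)⟩⟨n_j(t)| )`. -/
noncomputable def HSA {E : Type*} [NormedAddCommGroup E] [InnerProductSpace ℂ E]
    {N : ℕ} (n n' : Fin N → ℝ → E) (θ : Fin N → ℝ → ℝ) (t : ℝ) : E →L[ℂ] E :=
  Complex.I • ∑ j : Fin N,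
    (ketBra (n' j t) (n j t) + (Complex.I * (θ j t : ℂ)) • ketBra (n j t) (n j t))

/-- The trace of the square of the shortcut Hamiltonian satisfies
`Tr[H_SA(t)²] = Σ_j ( ‖ṅ_j(t)‖² + θ_j(t)² + 2 i θ_j(t) ⟪ṅ_j(t), n_j(t)⟫ )`. -/
theorem trace_sq_shortcut_hamiltonian
    {E : Type*} [NormedAddCommGroup E] [InnerProductSpace ℂ E] [FiniteDimensional ℂ E]
    {N : ℕ} (n n' : Fin N → ℝ → E) (θ : Fin N → ℝ → ℝ)
    (hON : ∀ t : ℝ, Orthonormal ℂ (fun j : Fin N => n j t))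
    (hspan : ∀ t : ℝ, Submodule.span ℂ (Set.range (fun j : Fin N => n j t)) = ⊤)
    (hn : ∀ (j : Fin N) (t : ℝ), HasDerivAt (n j) (n' j t) t) :
    ∀ t : ℝ,
      LinearMap.trace ℂ E (((HSA n n' θ t).comp (HSA n n' θ t) : E →L[ℂ] E) : E →ₗ[ℂ] E) =
        ∑ j : Fin N, (((‖n' j t‖ ^ 2 : ℝ) : ℂ) + ((θ j t : ℂ)) ^ 2
          + 2 * Complex.I * (θ j t : ℂ) * (inner ℂ (n' j t) (n j t) : ℂ)) := by
  intro t
  -- the orthonormal basis at time t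
  let b : OrthonormalBasis (Fin N) ℂ E := OrthonormalBasis.mk (hON t) (hspan t).ge
  have hb : ∀ j, b j = n j t := fun j => by simp [b, OrthonormalBasis.coe_mk]
  -- orthonormality as an ite
  have hd : ∀ j k, (inner ℂ (n j t) (n k t) : ℂ) = if j = k then 1 else 0 :=
    fun j k => orthonormal_iff_ite.mp (hON t) j k
  -- antisymmetry from differentiating orthonormality
  have key : ∀ j k, (inner ℂ (n j t) (n' k t) : ℂ) + (inner ℂ (n' j t) (n k t) : ℂ) = 0 := by
    intro j k
    have h1 : HasDerivAt (fun s => (inner ℂ (n j s) (n k s) : ℂ))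
        ((inner ℂ (n j t) (n' k t) : ℂ) + (inner ℂ (n' j t) (n k t) : ℂ)) t :=
      (hn j t).inner ℂ (hn k t)
    have h2 : HasDerivAt (fun s => (inner ℂ (n j s) (n k s) : ℂ)) 0 t := by
      have he : (fun s => (inner ℂ (n j s) (n k s) : ℂ)) =
          fun _ => if j = k then (1 : ℂ) else 0 :=
        funext fun s => orthonormal_iff_ite.mp (hON s) j k
      rw [he]; exact hasDerivAt_const _ _
    exact h1.unique h2
  have tr1 : ∀ u v : E, LinearMap.trace ℂ E ((ketBra u v : E →L[ℂ] E) : E →ₗ[ℂ] E)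
      = (inner ℂ v u : ℂ) := trace_ketBra b
  set A : Fin N → (E →L[ℂ] E) := fun j =>
    ketBra (n' j t) (n j t) + (Complex.I * (θ j t : ℂ)) • ketBra (n j t) (n j t) with hA
  have trA : ∀ j k, LinearMap.trace ℂ E ((((A j).comp (A k)) : E →L[ℂ] E) : E →ₗ[ℂ] E)
      = (inner ℂ (n j t) (n' k t) : ℂ) * (inner ℂ (n k t) (n' j t) : ℂ)
        + (Complex.I * (θ k t : ℂ)) * ((inner ℂ (n j t) (n k t) : ℂ) * (inner ℂ (n k t) (n' j t) : ℂ))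
        + (Complex.I * (θ j t : ℂ)) * ((inner ℂ (n j t) (n' k t) : ℂ) * (inner ℂ (n k t) (n j t) : ℂ))
        + (Complex.I * (θ j t : ℂ)) * (Complex.I * (θ k t : ℂ))
            * ((inner ℂ (n j t) (n k t) : ℂ) * (inner ℂ (n k t) (n j t) : ℂ)) := by
    intro j k
    simp only [hA, ContinuousLinearMap.add_comp, ContinuousLinearMap.comp_add,
      ContinuousLinearMap.smul_comp, ContinuousLinearMap.comp_smul, ketBra_comp_ketBra,
      smul_smul, ContinuousLinearMap.coe_add, ContinuousLinearMap.coe_smul,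
      map_add, map_smul, tr1, smul_eq_mul]
    ring
  have hHH : (((HSA n n' θ t).comp (HSA n n' θ t) : E →L[ℂ] E) : E →ₗ[ℂ] E) =
      (Complex.I * Complex.I) • ∑ j : Fin N, ∑ k : Fin N,
        ((((A j).comp (A k)) : E →L[ℂ] E) : E →ₗ[ℂ] E) := by
    have h1 : HSA n n' θ t = Complex.I • ∑ j : Fin N, A j := rfl
    rw [h1, ContinuousLinearMap.smul_comp, ContinuousLinearMap.comp_smul, smul_smul,
      ← ContinuousLinearMap.mul_def, Finset.sum_mul_sum]
    simp only [ContinuousLinearMap.mul_def, ContinuousLinearMap.coe_smul,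
      ContinuousLinearMap.coe_sum]
  rw [hHH, map_smul, map_sum]
  simp only [map_sum, trA, smul_eq_mul]
  have hkey' : ∀ j k, (inner ℂ (n j t) (n' k t) : ℂ) = -(inner ℂ (n' j t) (n k t) : ℂ) :=
    fun j k => by linear_combination key j k
  have hP : ∀ j, ∑ k : Fin N, (inner ℂ (n' j t) (n k t) : ℂ) * (inner ℂ (n k t) (n' j t) : ℂ)
      = ((‖n' j t‖ : ℂ)) ^ 2 := by
    intro j
    have := b.sum_inner_mul_inner (n' j t) (n' j t)
    simp only [hb] at this
    rw [this, inner_self_eq_norm_sq_to_K]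
    norm_num
  have hfin : ∀ j : Fin N, (∑ k : Fin N,
      ((inner ℂ (n j t) (n' k t) : ℂ) * (inner ℂ (n k t) (n' j t) : ℂ) +
          Complex.I * (θ k t : ℂ) * ((inner ℂ (n j t) (n k t) : ℂ) * (inner ℂ (n k t) (n' j t) : ℂ)) +
        Complex.I * (θ j t : ℂ) * ((inner ℂ (n j t) (n' k t) : ℂ) * (inner ℂ (n k t) (n j t) : ℂ)) +
        Complex.I * (θ j t : ℂ) * (Complex.I * (θ k t : ℂ))
          * ((inner ℂ (n j t) (n k t) : ℂ) * (inner ℂ (n k t) (n j t) : ℂ)))) =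
      -((((‖n' j t‖ ^ 2 : ℝ)) : ℂ) + ((θ j t : ℂ)) ^ 2
          + 2 * Complex.I * (θ j t : ℂ) * (inner ℂ (n' j t) (n j t) : ℂ)) := by
    intro j
    simp only [Finset.sum_add_distrib]
    have e1 : ∑ k : Fin N, (inner ℂ (n j t) (n' k t) : ℂ) * (inner ℂ (n k t) (n' j t) : ℂ)
        = -(((‖n' j t‖ : ℂ)) ^ 2) := by
      have e0 : ∀ k : Fin N, (inner ℂ (n j t) (n' k t) : ℂ) * (inner ℂ (n k t) (n' j t) : ℂ)
          = -((inner ℂ (n' j t) (n k t) : ℂ) * (inner ℂ (n k t) (n' j t) : ℂ)) :=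
        fun k => by rw [hkey' j k]; ring
      simp only [e0]
      rw [Finset.sum_neg_distrib, hP j]
    rw [e1]
    simp only [hd, hkey' j j, ite_mul, mul_ite, mul_zero, mul_one, zero_mul, one_mul,
      Finset.sum_ite_eq, Finset.sum_ite_eq', Finset.mem_univ, if_true]
    push_cast
    ring_nf
    linear_combination ((θ j t : ℂ)) ^ 2 * Complex.I_sq
  rw [Finset.sum_congr rfl (fun j _ => hfin j)]
  simp only [Complex.I_mul_I, Finset.sum_neg_distrib, neg_neg, neg_mul, one_mul,
    ← Finset.sum_neg_distrib]
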